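/- For θ > 0 let F(s;θ) be the cdf of U[0,θ] (F(s;θ) = 0 for s ≤ 0, s/θ for 0 < s < θ, 1 for s ≥ θ), fix ψ₀ > 0, and define C(ψ) = ∫_{−∞}^{∞}(F(s;ψ) − F(s;ψ₀))² ds for ψ > 0. Then C is differentiable on (0,ψ₀) ∪ (ψ₀,∞) with C′(ψ) = 2(ψ−ψ₀)/(3ψ₀) < 0 for 0 < ψ < ψ₀ and C′(ψ) = (ψ² − ψ₀²)/(3ψ²) > 0 for ψ > ψ₀, and C(ψ₀) = 0; consequently, for every ε > 0, inf{ C(ψ) : ψ > 0, |ψ − ψ₀| ≥ ε } > 0, i.e. ψ₀ is the well-separated unique minimizer of the population Cramér objective. -/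

import Mathlib

open MeasureTheory Set

lemma uniform_cramer_integral (F : ℝ → ℝ → ℝ)
    (hF : ∀ s θ : ℝ, 0 < θ →
      F s θ = if s ≤ 0 then 0 else if s < θ then s / θ else 1)
    (a b : ℝ) (ha : 0 < a) (hab : a ≤ b) :
    ∫ s : ℝ, (F s a - F s b) ^ 2 = (b - a) ^ 2 / (3 * b) := by
  have hb : 0 < b := lt_of_lt_of_le ha hab
  set h : ℝ → ℝ := fun s => (F s a - F s b) ^ 2 with hh
  have hsupp : ∀ s, s ∉ Ioc (0:ℝ) b → h s = 0 := by
    intro s hs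
    simp only [mem_Ioc, not_and_or, not_lt, not_le] at hs
    rcases hs with hs | hs
    · simp [hh, hF s a ha, hF s b hb, hs]
    · have h1 : ¬ s ≤ 0 := by linarith
      have h2 : ¬ s < a := by linarith
      have h3 : ¬ s < b := by linarith
      simp [hh, hF s a ha, hF s b hb, h1, h2, h3]
  have heq1 : ∀ s ∈ Ioc (0:ℝ) a, h s = (s / a - s / b) ^ 2 := by
    intro s hs
    have h1 : ¬ s ≤ 0 := not_le.mpr hs.1
    have hFb : F s b = s / b := by
      rw [hF s b hb]
      rcases lt_or_eq_of_le (hs.2.trans hab) with h' | h'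
      · simp [h1, h']
      · simp [h1, h', div_self hb.ne', hb]
    have hFa : F s a = s / a := by
      rw [hF s a ha]
      rcases lt_or_eq_of_le hs.2 with h' | h'
      · simp [h1, h']
      · simp [h1, h', div_self ha.ne', ha]
    simp [hh, hFa, hFb]
  have heq2 : ∀ s ∈ Ioc a b, h s = (1 - s / b) ^ 2 := by
    intro s hs
    have h0 : (0:ℝ) < s := lt_of_lt_of_le ha hs.1.le
    have h1 : ¬ s ≤ 0 := not_le.mpr h0
    have h2 : ¬ s < a := not_lt.mpr hs.1.le
    have hFb : F s b = s / b := by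
      rw [hF s b hb]
      rcases lt_or_eq_of_le hs.2 with h' | h'
      · simp [h1, h']
      · simp [h1, h', div_self hb.ne', hb]
    rw [hh]
    simp only [hF s a ha, h1, h2, if_false, hFb]
  have hint1 : IntegrableOn h (Ioc 0 a) := by
    rw [integrableOn_congr_fun heq1 measurableSet_Ioc]
    exact (Continuous.integrableOn_Ioc (by fun_prop))
  have hint2 : IntegrableOn h (Ioc a b) := by
    rw [integrableOn_congr_fun heq2 measurableSet_Ioc]
    exact (Continuous.integrableOn_Ioc (by fun_prop))
  have hind : h = (Ioc (0:ℝ) b).indicator h := by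
    funext s
    by_cases hs : s ∈ Ioc (0:ℝ) b
    · simp [hs]
    · simp [hs, hsupp s hs]
  have hsplit : Ioc (0:ℝ) a ∪ Ioc a b = Ioc 0 b := Ioc_union_Ioc_eq_Ioc ha.le hab
  calc ∫ s : ℝ, h s = ∫ s in Ioc (0:ℝ) b, h s := by
        conv_lhs => rw [hind]
        rw [integral_indicator measurableSet_Ioc]
    _ = (∫ s in Ioc (0:ℝ) a, h s) + ∫ s in Ioc a b, h s := by
        rw [← hsplit, setIntegral_union (Ioc_disjoint_Ioc_of_le le_rfl) measurableSet_Ioc hint1 hint2]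
    _ = (∫ s in Ioc (0:ℝ) a, (s / a - s / b) ^ 2) + ∫ s in Ioc a b, (1 - s / b) ^ 2 := by
        rw [setIntegral_congr_fun measurableSet_Ioc heq1,
          setIntegral_congr_fun measurableSet_Ioc heq2]
    _ = (∫ s in (0:ℝ)..a, (s / a - s / b) ^ 2) + ∫ s in a..b, (1 - s / b) ^ 2 := by
        rw [intervalIntegral.integral_of_le ha.le, intervalIntegral.integral_of_le hab]
    _ = (b - a) ^ 2 / (3 * b) := by
        have hI1 : ∫ s in (0:ℝ)..a, (s / a - s / b) ^ 2
            = a ^ 3 / 3 * (1 / a - 1 / b) ^ 2 - 0 ^ 3 / 3 * (1 / a - 1 / b) ^ 2 := by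
          apply intervalIntegral.integral_eq_sub_of_hasDerivAt
            (f := fun x : ℝ => x ^ 3 / 3 * (1 / a - 1 / b) ^ 2)
          · intro x _
            have hd : HasDerivAt (fun x : ℝ => x ^ 3 / 3 * (1 / a - 1 / b) ^ 2)
                (3 * x ^ 2 * 1 / 3 * (1 / a - 1 / b) ^ 2) x :=
              (((hasDerivAt_id x).pow 3).div_const 3).mul_const _
            have : (x / a - x / b) ^ 2 = 3 * x ^ 2 * 1 / 3 * (1 / a - 1 / b) ^ 2 := by
              field_simp
            rw [this]; convert hd using 2 <;> norm_num
          · exact (by fun_prop : Continuous fun s : ℝ => (s / a - s / b) ^ 2).intervalIntegrable _ _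
        have hI2 : ∫ s in a..b, (1 - s / b) ^ 2
            = (-((b - b) ^ 3 / (3 * b ^ 2))) - (-((b - a) ^ 3 / (3 * b ^ 2))) := by
          apply intervalIntegral.integral_eq_sub_of_hasDerivAt
            (f := fun x : ℝ => -((b - x) ^ 3 / (3 * b ^ 2)))
          · intro x _
            have hd : HasDerivAt (fun x : ℝ => -((b - x) ^ 3 / (3 * b ^ 2)))
                (-((3 * (b - x) ^ 2 * (-1)) / (3 * b ^ 2))) x :=
              ((((hasDerivAt_id x).const_sub b).pow 3).div_const _).neg
            have : (1 - x / b) ^ 2 = -((3 * (b - x) ^ 2 * (-1)) / (3 * b ^ 2)) := by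
              field_simp
            rw [this]; convert hd using 2 <;> norm_num
          · exact (by fun_prop : Continuous fun s : ℝ => (1 - s / b) ^ 2).intervalIntegrable _ _
        rw [hI1, hI2]
        field_simp
        ring

/-- Well-separated identification of `ψ₀` for the population Cramér objective
`C(ψ) = ∫ (F(s;ψ) − F(s;ψ₀))² ds` in the one-sided uniform model `Y ~ U[0,ψ₀]`:
`C` is differentiable off `ψ₀` with negative derivative `2(ψ−ψ₀)/(3ψ₀)` on `(0,ψ₀)`
and positive derivative `(ψ²−ψ₀²)/(3ψ²)` on `(ψ₀,∞)`, `C(ψ₀) = 0`, and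
`inf { C(ψ) : ψ > 0, |ψ−ψ₀| ≥ ε } > 0` for every `ε > 0`. -/
theorem stmt_13 (F : ℝ → ℝ → ℝ)
    (hF : ∀ s θ : ℝ, 0 < θ →
      F s θ = if s ≤ 0 then 0 else if s < θ then s / θ else 1)
    (ψ₀ : ℝ) (hψ₀ : 0 < ψ₀) (C : ℝ → ℝ)
    (hC : ∀ ψ : ℝ, C ψ = ∫ s : ℝ, (F s ψ - F s ψ₀) ^ 2) :
    (∀ ψ : ℝ, 0 < ψ → ψ < ψ₀ →
      HasDerivAt C (2 * (ψ - ψ₀) / (3 * ψ₀)) ψ ∧ 2 * (ψ - ψ₀) / (3 * ψ₀) < 0) ∧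
    (∀ ψ : ℝ, ψ₀ < ψ →
      HasDerivAt C ((ψ ^ 2 - ψ₀ ^ 2) / (3 * ψ ^ 2)) ψ ∧
        0 < (ψ ^ 2 - ψ₀ ^ 2) / (3 * ψ ^ 2)) ∧
    C ψ₀ = 0 ∧
    (∀ ε : ℝ, 0 < ε → ∃ δ : ℝ, 0 < δ ∧ ∀ ψ : ℝ, 0 < ψ → ε ≤ |ψ - ψ₀| → δ ≤ C ψ) := by
  have hCle : ∀ ψ : ℝ, 0 < ψ → ψ ≤ ψ₀ → C ψ = (ψ - ψ₀) ^ 2 / (3 * ψ₀) := by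
    intro ψ hψ hle
    rw [hC, uniform_cramer_integral F hF ψ ψ₀ hψ hle]
    ring_nf
  have hCge : ∀ ψ : ℝ, ψ₀ ≤ ψ → C ψ = (ψ - ψ₀) ^ 2 / (3 * ψ) := by
    intro ψ hge
    rw [hC]
    have : ∀ s : ℝ, (F s ψ - F s ψ₀) ^ 2 = (F s ψ₀ - F s ψ) ^ 2 := fun s => by ring
    simp_rw [this]
    rw [uniform_cramer_integral F hF ψ₀ ψ hψ₀ hge]
  refine ⟨?_, ?_, ?_, ?_⟩
  · intro ψ hψ hlt
    constructor
    · have hd : HasDerivAt (fun x : ℝ => (x - ψ₀) ^ 2 / (3 * ψ₀))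
          (2 * (ψ - ψ₀) / (3 * ψ₀)) ψ := by
        have h1 : HasDerivAt (fun x : ℝ => (x - ψ₀) ^ 2 / (3 * ψ₀))
            ((2 : ℕ) * (ψ - ψ₀) ^ (2 - 1) * 1 / (3 * ψ₀)) ψ :=
          (((hasDerivAt_id ψ).sub_const ψ₀).pow 2).div_const _
        convert h1 using 1
        norm_num
      apply hd.congr_of_eventuallyEq
      filter_upwards [Ioo_mem_nhds hψ hlt] with x hx
      exact hCle x hx.1 hx.2.le
    · apply div_neg_of_neg_of_pos <;> nlinarith
  · intro ψ hlt
    have hψ : 0 < ψ := hψ₀.trans hlt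
    constructor
    · have hd : HasDerivAt (fun x : ℝ => (x - ψ₀) ^ 2 / (3 * x))
          ((ψ ^ 2 - ψ₀ ^ 2) / (3 * ψ ^ 2)) ψ := by
        have hnum : HasDerivAt (fun x : ℝ => (x - ψ₀) ^ 2)
            ((2 : ℕ) * (ψ - ψ₀) ^ (2 - 1) * 1) ψ :=
          ((hasDerivAt_id ψ).sub_const ψ₀).pow 2
        have hden : HasDerivAt (fun x : ℝ => 3 * x) 3 ψ := by
          simpa using (hasDerivAt_id ψ).const_mul 3
        have h1 := hnum.div hden (by positivity : (3 : ℝ) * ψ ≠ 0)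
        refine h1.congr_deriv ?_
        rw [div_eq_div_iff (by positivity) (by positivity)]
        push_cast
        ring
      apply hd.congr_of_eventuallyEq
      filter_upwards [Ioi_mem_nhds hlt] with x hx
      exact hCge x (le_of_lt hx)
    · apply div_pos <;> nlinarith
  · rw [hCle ψ₀ hψ₀ le_rfl]; ring
  · intro ε hε
    refine ⟨ε ^ 2 / (3 * (ψ₀ + ε)), by positivity, ?_⟩
    intro ψ hψ habs
    rcases le_or_gt ψ ψ₀ with hle | hgt
    · have h1 : ε ≤ ψ₀ - ψ := by
        rw [abs_of_nonpos (by linarith)] at habs; linarith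
      rw [hCle ψ hψ hle, div_le_div_iff₀ (by positivity) (by positivity)]
      nlinarith [mul_le_mul h1 h1 hε.le (by linarith : (0:ℝ) ≤ ψ₀ - ψ)]
    · have h1 : ε ≤ ψ - ψ₀ := by
        rw [abs_of_nonneg (by linarith)] at habs; linarith
      rw [hCge ψ hgt.le, div_le_div_iff₀ (by positivity) (by positivity)]
      nlinarith [mul_le_mul h1 h1 hε.le (by linarith : (0:ℝ) ≤ ψ - ψ₀),
        mul_nonneg (mul_nonneg hε.le (by linarith : (0:ℝ) ≤ ψ - ψ₀))
          (by linarith : (0:ℝ) ≤ ψ - ψ₀ - ε)]
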